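/- arXiv:1809.06792 — 7 statements merged into one kernel-verified Lean document; each statement's English description precedes it below -/
import Mathlib

section
/- Let α, β, κ be partitions with α ≻ κ ≺ β (i.e. κ ⊆ α, κ ⊆ β with interlacing α_i ≥ κ_i ≥ α_{i+1} and β_i ≥ κ_i ≥ β_{i+1}), and let G ∈ ℕ. Define ν by ν_1 = max(α_1, β_1) + G and ν_s = max(α_s, β_s) + min(α_{s-1}, β_{s-1}) − κ_{s-1} for s ≥ 2. Then ν is a partition satisfying α ≺ ν ≻ β. -/
open scoped Classical

noncomputable section

/-! ## Partitions and interlacing -/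

def IsPartition (a : ℕ → ℕ) : Prop :=
  (∀ i, a (i + 1) ≤ a i) ∧ ∃ N, ∀ i, N ≤ i → a i = 0

/-- `Interlaces μ lam` means μ ≺ lam, i.e. lam_{i+1} ≤ μ_i ≤ lam_i (0-indexed). -/
def Interlaces (μ lam : ℕ → ℕ) : Prop :=
  ∀ i, lam (i + 1) ≤ μ i ∧ μ i ≤ lam i

def psum (a : ℕ → ℕ) : ℕ := ∑' i, a i

def plen (a : ℕ → ℕ) : ℕ := sInf {N | ∀ i, N ≤ i → a i = 0}

/-! ## rowRSK local rule -/

def rowRSK (α β κ : ℕ → ℕ) (G : ℕ) : ℕ → ℕ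
  | 0 => max (α 0) (β 0) + G
  | s + 1 => max (α (s + 1)) (β (s + 1)) + min (α s) (β s) - κ s

/-! ## colRSK local rule -/

def Gdesc (α β κ : ℕ → ℕ) (G L : ℕ) : ℕ → ℕ
  | 0 => G
  | k + 1 =>
      Gdesc α β κ G L k -
          min (Gdesc α β κ G L k) (κ (L - (k + 1)) - max (α (L - (k + 1) + 1)) (β (L - (k + 1) + 1)))
        + (min (α (L - (k + 1))) (β (L - (k + 1))) - κ (L - (k + 1)))

def colG (α β κ : ℕ → ℕ) (G s : ℕ) : ℕ :=
  Gdesc α β κ G (min (plen α) (plen β)) (min (plen α) (plen β) - s)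

def colRSK (α β κ : ℕ → ℕ) (G : ℕ) : ℕ → ℕ
  | 0 => max (α 0) (β 0) + colG α β κ G 0
  | s + 1 => min (max (α (s + 1)) (β (s + 1)) + colG α β κ G (s + 1)) (κ s)

def colGi (α β ν : ℕ → ℕ) : ℕ → ℕ
  | 0 => ν 0 - max (α 0) (β 0)
  | s + 1 =>
      ν (s + 1) + colGi α β ν s + max (min (α s) (β s) - colGi α β ν s) (ν (s + 1))
        - max (α (s + 1)) (β (s + 1)) - min (α s) (β s)

def colKinv (α β ν : ℕ → ℕ) (s : ℕ) : ℕ :=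
  max (min (α s) (β s) - colGi α β ν s) (ν (s + 1))

def colGout (α β ν : ℕ → ℕ) : ℕ := colGi α β ν (min (plen α) (plen β))

/-! ## Statements 0,1,2 -/

instance : TopologicalSpace (MvPowerSeries (Fin 2) ℚ) :=
  (inferInstance : TopologicalSpace ((Fin 2 →₀ ℕ) → ℚ))

def IsGT (n : ℕ) (z : ℕ → ℕ → ℕ) : Prop :=
  (∀ i j, n ≤ i ∨ i < j → z i j = 0) ∧
  (∀ i j, i + 1 < n → j ≤ i → z (i + 1) (j + 1) ≤ z i j ∧ z i j ≤ z (i + 1) j)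

def gtType (z : ℕ → ℕ → ℕ) (i : ℕ) : ℕ :=
  (∑ j ∈ Finset.range (i + 1), z i j) - ∑ j ∈ Finset.range i, z (i - 1) j

def hpolyN (n k : ℕ) : MvPolynomial ℕ ℚ :=
  ∑ f ∈ Finset.univ.filter (fun f : Fin k → Fin n => Monotone f),
    ∏ j : Fin k, MvPolynomial.X ((f j : ℕ) + 1)

def hZN (n : ℕ) (e : ℤ) : MvPolynomial ℕ ℚ := if 0 ≤ e then hpolyN n e.toNat else 0

def schurN (n : ℕ) (μ : YoungDiagram) : MvPolynomial ℕ ℚ :=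
  Matrix.det (Matrix.of fun i j : Fin (μ.colLen 0) =>
    hZN n ((μ.rowLen (i : ℕ) : ℤ) - ((i : ℕ) : ℤ) + ((j : ℕ) : ℤ)))

abbrev LP : Type := AddMonoidAlgebra ℚ (ℕ →₀ ℤ)

def lpX (i : ℕ) (e : ℤ) : LP := AddMonoidAlgebra.single (Finsupp.single i e) 1

def hListLP (l : List LP) (k : ℕ) : LP :=
  ∑ f ∈ Finset.univ.filter (fun f : Fin k → Fin l.length => Monotone f),
    ∏ j : Fin k, l.get (f j)

def hZLP (l : List LP) (e : ℤ) : LP := if 0 ≤ e then hListLP l e.toNat else 0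

def varsSp (n : ℕ) : List LP := (List.range n).flatMap fun i => [lpX (i + 1) 1, lpX (i + 1) (-1)]

def varsSO (n : ℕ) : List LP := varsSp n ++ [1]

def varsS (n : ℕ) : List LP := (List.range n).map fun i => lpX (i + 1) 1

def spChar (n : ℕ) (lam : ℕ → ℕ) : LP :=
  (1 / 2 : ℚ) • Matrix.det (Matrix.of fun i j : Fin n =>
    hZLP (varsSp n) ((lam (i : ℕ) : ℤ) - ((i : ℕ) : ℤ) + ((j : ℕ) : ℤ)) +
      hZLP (varsSp n) ((lam (i : ℕ) : ℤ) - ((i : ℕ) : ℤ) - ((j : ℕ) : ℤ)))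

def soChar (n : ℕ) (lam : ℕ → ℕ) : LP :=
  Matrix.det (Matrix.of fun i j : Fin n =>
    hZLP (varsSO n) ((lam (i : ℕ) : ℤ) - ((i : ℕ) : ℤ) + ((j : ℕ) : ℤ)) -
      hZLP (varsSO n) ((lam (i : ℕ) : ℤ) - ((i : ℕ) : ℤ) - ((j : ℕ) : ℤ) - 2))

def schurLP (n : ℕ) (lam : ℕ → ℕ) : LP :=
  Matrix.det (Matrix.of fun i j : Fin n =>
    hZLP (varsS n) ((lam (i : ℕ) : ℤ) - ((i : ℕ) : ℤ) + ((j : ℕ) : ℤ)))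

def rect (n v : ℕ) : ℕ → ℕ := fun i => if i < n then v else 0

def UpRight (p : ℕ → ℕ × ℕ) (m : ℕ) : Prop :=
  ∀ k < m, p (k + 1) = ((p k).1 + 1, (p k).2) ∨ p (k + 1) = ((p k).1, (p k).2 + 1)

def domP2PR (n : ℕ) : Finset (ℕ × ℕ) :=
  (Finset.Icc 1 n ×ˢ Finset.Icc 1 n).filter fun q => q.2 ≤ q.1

def wtP2PR (n : ℕ) (W : ℕ × ℕ → ℕ) : MvPolynomial ℕ ℚ :=
  ∏ q ∈ domP2PR n,
    (if q.1 = q.2 then MvPolynomial.X q.1 else MvPolynomial.X q.1 * MvPolynomial.X q.2) ^ W q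

def PathP2PR (n : ℕ) (p : ℕ → ℕ × ℕ) : Prop :=
  p 0 = (1, 1) ∧ p (2 * n - 2) = (n, n) ∧ UpRight p (2 * n - 2) ∧
    ∀ k ≤ 2 * n - 2, p k ∈ domP2PR n

def WsetP2PR (n u : ℕ) : Set ((ℕ × ℕ) → ℕ) :=
  {W | (∀ q ∉ domP2PR n, W q = 0) ∧
    ∀ p, PathP2PR n p → ∑ k ∈ Finset.range (2 * n - 1), W (p k) ≤ u}

def domP2L (n : ℕ) : Finset (ℕ × ℕ) :=
  (Finset.Icc 1 n ×ˢ Finset.Icc 1 n).filter fun q => q.1 + q.2 ≤ n + 1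

def wtP2L (n : ℕ) (W : ℕ × ℕ → ℕ) : MvPolynomial ℕ ℚ :=
  ∏ q ∈ domP2L n, (MvPolynomial.X q.1 * MvPolynomial.X (n - q.2 + 1)) ^ W q

def PathP2L (n : ℕ) (p : ℕ → ℕ × ℕ) : Prop :=
  p 0 = (1, 1) ∧ (p (n - 1)).1 + (p (n - 1)).2 = n + 1 ∧ UpRight p (n - 1) ∧
    ∀ k ≤ n - 1, p k ∈ domP2L n

def WsetP2L (n v : ℕ) : Set ((ℕ × ℕ) → ℕ) :=
  {W | (∀ q ∉ domP2L n, W q = 0) ∧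
    ∀ p, PathP2L n p → ∑ k ∈ Finset.range n, W (p k) ≤ v}

def domP2HLR (n : ℕ) : Finset (ℕ × ℕ) :=
  (Finset.Icc 1 n ×ˢ Finset.Icc 1 (2 * n)).filter fun q => q.1 ≤ q.2 ∧ q.1 + q.2 ≤ 2 * n + 1

def rowVar (n j : ℕ) : ℕ := if j ≤ n then j else 2 * n + 1 - j

def wtP2HLR (n : ℕ) (W : ℕ × ℕ → ℕ) : MvPolynomial ℕ ℚ :=
  ∏ q ∈ domP2HLR n,
    (if q.1 = q.2 then MvPolynomial.X q.1
      else MvPolynomial.X q.1 * MvPolynomial.X (rowVar n q.2)) ^ W q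

def PathP2HLR (n : ℕ) (p : ℕ → ℕ × ℕ) : Prop :=
  p 0 = (1, 1) ∧ (p (2 * n - 1)).1 + (p (2 * n - 1)).2 = 2 * n + 1 ∧ UpRight p (2 * n - 1) ∧
    ∀ k ≤ 2 * n - 1, p k ∈ domP2HLR n

def WsetP2HLR (n u : ℕ) : Set ((ℕ × ℕ) → ℕ) :=
  {W | (∀ q ∉ domP2HLR n, W q = 0) ∧
    ∀ p, PathP2HLR n p → ∑ k ∈ Finset.range (2 * n), W (p k) ≤ u}

def wtP2HLRlp (n : ℕ) (W : ℕ × ℕ → ℕ) : LP :=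
  ∏ q ∈ domP2HLR n,
    (if q.1 = q.2 then lpX q.1 1 else lpX q.1 1 * lpX (rowVar n q.2) 1) ^ W q

def growRow (w : ℕ → ℕ → ℕ) : ℕ → ℕ → ℕ → ℕ
  | 0, _ => fun _ => 0
  | _ + 1, 0 => fun _ => 0
  | i + 1, j + 1 =>
      rowRSK (growRow w i (j + 1)) (growRow w (i + 1) j) (growRow w i j) (w (i + 1) (j + 1))
  termination_by i j => (i, j)

def growCol (w : ℕ → ℕ → ℕ) : ℕ → ℕ → ℕ → ℕ
  | 0, _ => fun _ => 0
  | _ + 1, 0 => fun _ => 0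
  | i + 1, j + 1 =>
      colRSK (growCol w i (j + 1)) (growCol w (i + 1) j) (growCol w i j) (w (i + 1) (j + 1))
  termination_by i j => (i, j)

open Filter MeasureTheory in

theorem stmt0 (α β κ : ℕ → ℕ) (hα : IsPartition α) (hβ : IsPartition β) (hκ : IsPartition κ)
    (hκα : Interlaces κ α) (hκβ : Interlaces κ β) (G : ℕ) :
    IsPartition (rowRSK α β κ G) ∧ Interlaces α (rowRSK α β κ G) ∧
      Interlaces β (rowRSK α β κ G) := by
  have hmaxκ : ∀ s, max (α (s + 1)) (β (s + 1)) ≤ κ s :=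
    fun s => max_le (hκα s).1 (hκβ s).1
  have hκmin : ∀ s, κ s ≤ min (α s) (β s) :=
    fun s => le_min (hκα s).2 (hκβ s).2
  refine ⟨⟨fun i => ?_, ?_⟩, fun i => ?_, fun i => ?_⟩
  · cases i with
    | zero =>
      have h1 := hmaxκ 0; have h2 := hκmin 0
      simp only [rowRSK]; omega
    | succ s =>
      have h1 := hmaxκ s; have h2 := hκmin s
      have h3 := hmaxκ (s + 1); have h4 := hκmin (s + 1)
      simp only [rowRSK]; omega
  · obtain ⟨Na, ha⟩ := hα.2; obtain ⟨Nb, hb⟩ := hβ.2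
    refine ⟨max Na Nb + 1, fun i hi => ?_⟩
    obtain ⟨s, rfl⟩ : ∃ s, i = s + 1 := ⟨i - 1, by omega⟩
    have h1 := ha s (by omega); have h2 := hb s (by omega)
    have h3 := ha (s + 1) (by omega); have h4 := hb (s + 1) (by omega)
    have h5 := hκmin s
    simp only [rowRSK]; omega
  · cases i with
    | zero =>
      have h1 := hmaxκ 0; have h2 := hκmin 0
      simp only [rowRSK]; omega
    | succ s =>
      have h1 := hmaxκ s; have h2 := hκmin s
      have h3 := hmaxκ (s + 1); have h4 := hκmin (s + 1)
      simp only [rowRSK]; omega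
  · cases i with
    | zero =>
      have h1 := hmaxκ 0; have h2 := hκmin 0
      simp only [rowRSK]; omega
    | succ s =>
      have h1 := hmaxκ s; have h2 := hκmin s
      have h3 := hmaxκ (s + 1); have h4 := hκmin (s + 1)
      simp only [rowRSK]; omega


end
end

section
/- Fix partitions α, β. The rowRSK local rule, mapping a pair (κ, G) with α ≻ κ ≺ β and G ∈ ℕ to the partition ν given by ν_1 = max(α_1, β_1) + G and ν_s = max(α_s, β_s) + min(α_{s-1}, β_{s-1}) − κ_{s-1} (s ≥ 2), is a bijection from {(κ, G) : α ≻ κ ≺ β, G ∈ ℕ} onto {ν : α ≺ ν ≻ β}. -/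
open scoped Classical

noncomputable section

open Filter MeasureTheory in

theorem stmt2 (α β : ℕ → ℕ) (hα : IsPartition α) (hβ : IsPartition β) :
    Set.BijOn (fun p : (ℕ → ℕ) × ℕ => rowRSK α β p.1 p.2)
      {p | IsPartition p.1 ∧ Interlaces p.1 α ∧ Interlaces p.1 β}
      {ν | IsPartition ν ∧ Interlaces α ν ∧ Interlaces β ν} := by
  obtain ⟨hαd, Nα, hNα⟩ := hα
  obtain ⟨hβd, Nβ, hNβ⟩ := hβ
  refine ⟨?_, ?_, ?_⟩
  · -- MapsTo
    rintro ⟨κ, G⟩ ⟨⟨hκd, Nκ, hNκ⟩, hκα, hκβ⟩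
    dsimp only at hκd hNκ hκα hκβ
    refine ⟨⟨?_, ?_⟩, ?_, ?_⟩
    · intro i
      match i with
      | 0 =>
        have h1 := hκα 0; have h2 := hκβ 0
        show rowRSK α β κ G 1 ≤ rowRSK α β κ G 0
        simp only [rowRSK]; omega
      | s + 1 =>
        have h1 := hκα (s+1); have h2 := hκβ (s+1)
        have h3 := hκα s; have h4 := hκβ s
        show rowRSK α β κ G (s+2) ≤ rowRSK α β κ G (s+1)
        simp only [rowRSK]; omega
    · refine ⟨max (max Nα Nβ) Nκ + 1, fun i hi => ?_⟩
      match i, hi with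
      | s + 1, hi =>
        have ha1 : α (s+1) = 0 := hNα _ (by omega)
        have hb1 : β (s+1) = 0 := hNβ _ (by omega)
        have ha : α s = 0 := hNα _ (by omega)
        have hb : β s = 0 := hNβ _ (by omega)
        have hk : κ s = 0 := hNκ _ (by omega)
        show rowRSK α β κ G (s+1) = 0
        simp [rowRSK, ha, hb, ha1, hb1, hk]
    · intro i
      match i with
      | 0 =>
        have h1 := hκα 0; have h2 := hκβ 0
        constructor
        · show rowRSK α β κ G 1 ≤ α 0
          simp only [rowRSK]; omega
        · show α 0 ≤ rowRSK α β κ G 0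
          simp only [rowRSK]; omega
      | s + 1 =>
        have h1 := hκα (s+1); have h2 := hκβ (s+1)
        have h3 := hκα s; have h4 := hκβ s
        constructor
        · show rowRSK α β κ G (s+2) ≤ α (s+1)
          simp only [rowRSK]; omega
        · show α (s+1) ≤ rowRSK α β κ G (s+1)
          simp only [rowRSK]; omega
    · intro i
      match i with
      | 0 =>
        have h1 := hκα 0; have h2 := hκβ 0
        constructor
        · show rowRSK α β κ G 1 ≤ β 0
          simp only [rowRSK]; omega
        · show β 0 ≤ rowRSK α β κ G 0
          simp only [rowRSK]; omega
      | s + 1 =>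
        have h1 := hκα (s+1); have h2 := hκβ (s+1)
        have h3 := hκα s; have h4 := hκβ s
        constructor
        · show rowRSK α β κ G (s+2) ≤ β (s+1)
          simp only [rowRSK]; omega
        · show β (s+1) ≤ rowRSK α β κ G (s+1)
          simp only [rowRSK]; omega
  · -- InjOn
    rintro ⟨κ, G⟩ ⟨⟨hκd, _⟩, hκα, hκβ⟩ ⟨κ', G'⟩ ⟨⟨hκd', _⟩, hκα', hκβ'⟩ heq
    dsimp only at hκα hκβ hκα' hκβ'
    simp only [Prod.mk.injEq]
    have h0 := congrFun heq 0
    simp only [rowRSK] at h0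
    refine ⟨funext fun s => ?_, by omega⟩
    have hs := congrFun heq (s+1)
    simp only [rowRSK] at hs
    have h1 := hκα s; have h2 := hκβ s
    have h1' := hκα' s; have h2' := hκβ' s
    omega
  · -- SurjOn
    rintro ν ⟨⟨hνd, Nν, hNν⟩, hαν, hβν⟩
    refine ⟨⟨fun s => max (α (s+1)) (β (s+1)) + min (α s) (β s) - ν (s+1),
      ν 0 - max (α 0) (β 0)⟩, ⟨⟨?_, ?_⟩, ?_, ?_⟩, ?_⟩
    · intro s
      have h1 := hαν s; have h2 := hβν s
      have h3 := hαν (s+1); have h4 := hβν (s+1)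
      have h5 := hαν (s+1+1); have h6 := hβν (s+1+1)
      simp only; omega
    · refine ⟨max (max Nα Nβ) Nν, fun i hi => ?_⟩
      have ha : α (i+1) = 0 := hNα _ (by omega)
      have hb : β (i+1) = 0 := hNβ _ (by omega)
      have ha0 : α i = 0 := hNα _ (by omega)
      have hb0 : β i = 0 := hNβ _ (by omega)
      simp only [ha, hb, ha0, hb0]; omega
    · intro s
      have h1 := hαν s; have h2 := hβν s
      have h3 := hαν (s+1); have h4 := hβν (s+1)
      simp only; omega
    · intro s
      have h1 := hαν s; have h2 := hβν s
      have h3 := hαν (s+1); have h4 := hβν (s+1)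
      simp only; omega
    · funext i
      match i with
      | 0 =>
        have h1 := hαν 0; have h2 := hβν 0
        show rowRSK α β _ _ 0 = ν 0
        simp only [rowRSK]; omega
      | s + 1 =>
        have h1 := hαν s; have h2 := hβν s
        have h3 := hαν (s+1); have h4 := hβν (s+1)
        show rowRSK α β _ _ (s+1) = ν (s+1)
        simp only [rowRSK]; omega

/-! ## Statement 3: skew Cauchy -/


end
end

section
/- Fix partitions α, β and a single variable specialization. Then Σ_ν s_{ν/α}(x) s_{ν/β}(y) = (1/(1−xy)) Σ_κ s_{α/κ}(y) s_{β/κ}(x) as an identity of formal power series in x and y, where s_{λ/μ}(x) = x^{|λ|−|μ|} if μ ≺ λ and 0 otherwise. -/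
open scoped Classical

noncomputable section

/-! ### Auxiliary lemmas for stmt3 -/

section Stmt3Aux

lemma psum_eq_sum' {a : ℕ → ℕ} {N : ℕ} (hN : ∀ i, N ≤ i → a i = 0) :
    psum a = ∑ i ∈ Finset.range N, a i :=
  tsum_eq_sum (fun i hi => hN i (by simpa using hi))

lemma psum_le_psum' {a b : ℕ → ℕ} (hab : ∀ i, a i ≤ b i) (hb : ∃ N, ∀ i, N ≤ i → b i = 0) :
    psum a ≤ psum b := by
  obtain ⟨N, hN⟩ := hb
  have ha : ∀ i, N ≤ i → a i = 0 := fun i hi => Nat.le_zero.mp (hN i hi ▸ hab i)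
  rw [psum_eq_sum' hN, psum_eq_sum' ha]
  exact Finset.sum_le_sum fun i _ => hab i

variable {α β : ℕ → ℕ}

lemma rowRSK_mem (hα : IsPartition α) (hβ : IsPartition β) {κ : ℕ → ℕ} (hκ : IsPartition κ)
    (h1 : Interlaces κ α) (h2 : Interlaces κ β) (g : ℕ) :
    IsPartition (rowRSK α β κ g) ∧ Interlaces α (rowRSK α β κ g) ∧
      Interlaces β (rowRSK α β κ g) := by
  have hb : ∀ s, max (α (s+1)) (β (s+1)) ≤ κ s ∧ κ s ≤ min (α s) (β s) := fun s =>
    ⟨max_le (h1 s).1 (h2 s).1, le_min (h1 s).2 (h2 s).2⟩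
  obtain ⟨Na, hNa⟩ := hα.2
  obtain ⟨Nb, hNb⟩ := hβ.2
  obtain ⟨Nk, hNk⟩ := hκ.2
  refine ⟨⟨?_, ⟨Na + Nb + Nk + 1, ?_⟩⟩, ?_, ?_⟩
  · intro i
    cases i with
    | zero =>
      show max (α (0+1)) (β (0+1)) + min (α 0) (β 0) - κ 0 ≤ max (α 0) (β 0) + g
      have := hb 0
      have := hα.1 0
      have := hβ.1 0
      omega
    | succ s =>
      show max (α (s+1+1)) (β (s+1+1)) + min (α (s+1)) (β (s+1)) - κ (s+1) ≤
        max (α (s+1)) (β (s+1)) + min (α s) (β s) - κ s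
      have := hb s; have := hb (s+1); have := hα.1 (s+1); have := hβ.1 (s+1)
      omega
  · intro i hi
    obtain ⟨s, rfl⟩ : ∃ s, i = s + 1 := ⟨i - 1, by omega⟩
    show max (α (s+1)) (β (s+1)) + min (α s) (β s) - κ s = 0
    have h1 := hNa (s+1) (by omega)
    have h2 := hNb (s+1) (by omega)
    have h3 := hNa s (by omega)
    have h4 := hNb s (by omega)
    simp [h1, h2, h3, h4]
  · intro i
    cases i with
    | zero =>
      constructor
      · show max (α (0+1)) (β (0+1)) + min (α 0) (β 0) - κ 0 ≤ α 0
        have := hb 0; omega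
      · show α 0 ≤ max (α 0) (β 0) + g
        omega
    | succ s =>
      constructor
      · show max (α (s+1+1)) (β (s+1+1)) + min (α (s+1)) (β (s+1)) - κ (s+1) ≤ α (s+1)
        have := hb (s+1); omega
      · show α (s+1) ≤ max (α (s+1)) (β (s+1)) + min (α s) (β s) - κ s
        have := hb s; omega
  · intro i
    cases i with
    | zero =>
      constructor
      · show max (α (0+1)) (β (0+1)) + min (α 0) (β 0) - κ 0 ≤ β 0
        have := hb 0; omega
      · show β 0 ≤ max (α 0) (β 0) + g
        omega
    | succ s =>
      constructor
      · show max (α (s+1+1)) (β (s+1+1)) + min (α (s+1)) (β (s+1)) - κ (s+1) ≤ β (s+1)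
        have := hb (s+1); omega
      · show β (s+1) ≤ max (α (s+1)) (β (s+1)) + min (α s) (β s) - κ s
        have := hb s; omega

lemma rowRSK_psum (hα : IsPartition α) (hβ : IsPartition β) {κ : ℕ → ℕ} (hκ : IsPartition κ)
    (h1 : Interlaces κ α) (h2 : Interlaces κ β) (g : ℕ) :
    psum (rowRSK α β κ g) + psum κ = psum α + psum β + g := by
  have hb : ∀ s, max (α (s+1)) (β (s+1)) ≤ κ s ∧ κ s ≤ min (α s) (β s) := fun s =>
    ⟨max_le (h1 s).1 (h2 s).1, le_min (h1 s).2 (h2 s).2⟩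
  obtain ⟨Na, hNa⟩ := hα.2
  obtain ⟨Nb, hNb⟩ := hβ.2
  obtain ⟨Nk, hNk⟩ := hκ.2
  set N := Na + Nb + Nk + 1 with hN
  have hZa : ∀ i, N ≤ i → α i = 0 := fun i hi => hNa i (by omega)
  have hZb : ∀ i, N ≤ i → β i = 0 := fun i hi => hNb i (by omega)
  have hZk : ∀ i, N ≤ i → κ i = 0 := fun i hi => hNk i (by omega)
  have hZn : ∀ i, N + 1 ≤ i → rowRSK α β κ g i = 0 := by
    intro i hi
    obtain ⟨s, rfl⟩ : ∃ s, i = s + 1 := ⟨i - 1, by omega⟩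
    show max (α (s+1)) (β (s+1)) + min (α s) (β s) - κ s = 0
    simp [hZa (s+1) (by omega), hZb (s+1) (by omega), hZa s (by omega), hZb s (by omega)]
  rw [psum_eq_sum' hZn, psum_eq_sum' hZk, psum_eq_sum' hZa, psum_eq_sum' hZb]
  rw [Finset.sum_range_succ' _ N]
  have key : ∀ s, rowRSK α β κ g (s + 1) + κ s = max (α (s+1)) (β (s+1)) + min (α s) (β s) := by
    intro s
    show max (α (s+1)) (β (s+1)) + min (α s) (β s) - κ s + κ s = _
    have := hb s; omega
  have e1 : ∑ s ∈ Finset.range N, rowRSK α β κ g (s + 1) + ∑ s ∈ Finset.range N, κ s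
      = ∑ s ∈ Finset.range N, (max (α (s+1)) (β (s+1)) + min (α s) (β s)) := by
    rw [← Finset.sum_add_distrib]
    exact Finset.sum_congr rfl fun s _ => key s
  have e2 : ∑ s ∈ Finset.range N, (max (α (s+1)) (β (s+1)) + min (α s) (β s))
      = ∑ s ∈ Finset.range N, max (α (s+1)) (β (s+1)) + ∑ s ∈ Finset.range N, min (α s) (β s) :=
    Finset.sum_add_distrib
  have e3 : ∑ i ∈ Finset.range N, α i + ∑ i ∈ Finset.range N, β i
      = (∑ s ∈ Finset.range N, max (α (s+1)) (β (s+1)) + max (α 0) (β 0))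
        + ∑ s ∈ Finset.range N, min (α s) (β s) := by
    have hmm : ∀ i, α i + β i = max (α i) (β i) + min (α i) (β i) := fun i => by omega
    rw [← Finset.sum_add_distrib]
    have h4 : ∑ i ∈ Finset.range N, (α i + β i)
        = ∑ i ∈ Finset.range N, max (α i) (β i) + ∑ i ∈ Finset.range N, min (α i) (β i) := by
      rw [← Finset.sum_add_distrib]
      exact Finset.sum_congr rfl fun i _ => hmm i
    rw [h4]
    congr 1
    have h5 : ∑ i ∈ Finset.range (N+1), max (α i) (β i)
        = ∑ s ∈ Finset.range N, max (α (s+1)) (β (s+1)) + max (α 0) (β 0) :=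
      Finset.sum_range_succ' _ N
    have h6 : ∑ i ∈ Finset.range (N+1), max (α i) (β i)
        = ∑ i ∈ Finset.range N, max (α i) (β i) + max (α N) (β N) :=
      Finset.sum_range_succ _ N
    have h7 : max (α N) (β N) = 0 := by simp [hZa N le_rfl, hZb N le_rfl]
    omega
  show (∑ s ∈ Finset.range N, rowRSK α β κ g (s + 1) + rowRSK α β κ g 0) + _ = _
  have h0 : rowRSK α β κ g 0 = max (α 0) (β 0) + g := rfl
  omega

lemma kfin (hα : IsPartition α) :
    Finite {κ : ℕ → ℕ // IsPartition κ ∧ Interlaces κ α ∧ Interlaces κ β} := by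
  obtain ⟨N, hN⟩ := hα.2
  have hanti : ∀ i j : ℕ, i ≤ j → α j ≤ α i := fun i j h =>
    antitone_nat_of_succ_le hα.1 h
  have hinj : Function.Injective
      (fun κ : {κ : ℕ → ℕ // IsPartition κ ∧ Interlaces κ α ∧ Interlaces κ β} =>
        (fun i : Fin N => (⟨κ.1 i, by
          have h1 : κ.1 i ≤ α i := (κ.2.2.1 i).2
          have h2 : α i ≤ α 0 := hanti 0 i (Nat.zero_le _)
          omega⟩ : Fin (α 0 + 1))) ) := by
    intro κ κ' h
    apply Subtype.ext; funext i
    by_cases hi : i < N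
    · have := congrFun h ⟨i, hi⟩
      simpa [Fin.ext_iff] using this
    · have h1 : κ.1 i ≤ α i := (κ.2.2.1 i).2
      have h2 : κ'.1 i ≤ α i := (κ'.2.2.1 i).2
      have := hN i (by omega)
      omega
  exact Finite.of_injective _ hinj

lemma invk_mem (hα : IsPartition α) (hβ : IsPartition β) (ν : ℕ → ℕ)
    (hν : IsPartition ν) (h1 : Interlaces α ν) (h2 : Interlaces β ν) :
    IsPartition (fun s => max (α (s+1)) (β (s+1)) + min (α s) (β s) - ν (s+1)) ∧
      Interlaces (fun s => max (α (s+1)) (β (s+1)) + min (α s) (β s) - ν (s+1)) α ∧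
      Interlaces (fun s => max (α (s+1)) (β (s+1)) + min (α s) (β s) - ν (s+1)) β := by
  have hub : ∀ s, max (α (s+1)) (β (s+1)) ≤ ν (s+1) ∧ ν (s+1) ≤ min (α s) (β s) :=
    fun s => ⟨max_le (h1 (s+1)).2 (h2 (s+1)).2, le_min (h1 s).1 (h2 s).1⟩
  obtain ⟨Na, hNa⟩ := hα.2
  obtain ⟨Nb, hNb⟩ := hβ.2
  refine ⟨⟨fun s => ?_, ⟨Na + Nb, fun i hi => ?_⟩⟩, fun s => ⟨?_, ?_⟩, fun s => ⟨?_, ?_⟩⟩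
  · show max (α (s+1+1)) (β (s+1+1)) + min (α (s+1)) (β (s+1)) - ν (s+1+1) ≤
      max (α (s+1)) (β (s+1)) + min (α s) (β s) - ν (s+1)
    have := hub s; have := hub (s+1); have := hα.1 (s+1); have := hβ.1 (s+1); omega
  · show max (α (i+1)) (β (i+1)) + min (α i) (β i) - ν (i+1) = 0
    simp [hNa (i+1) (by omega), hNb (i+1) (by omega), hNa i (by omega), hNb i (by omega)]
  · show α (s+1) ≤ max (α (s+1)) (β (s+1)) + min (α s) (β s) - ν (s+1)
    have := hub s; omega
  · show max (α (s+1)) (β (s+1)) + min (α s) (β s) - ν (s+1) ≤ α s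
    have := hub s; omega
  · show β (s+1) ≤ max (α (s+1)) (β (s+1)) + min (α s) (β s) - ν (s+1)
    have := hub s; omega
  · show max (α (s+1)) (β (s+1)) + min (α s) (β s) - ν (s+1) ≤ β s
    have := hub s; omega

def rskEquiv (hα : IsPartition α) (hβ : IsPartition β) :
    ({κ : ℕ → ℕ // IsPartition κ ∧ Interlaces κ α ∧ Interlaces κ β} × ℕ) ≃
      {ν : ℕ → ℕ // IsPartition ν ∧ Interlaces α ν ∧ Interlaces β ν} where
  toFun p := ⟨rowRSK α β p.1.1 p.2, rowRSK_mem hα hβ p.1.2.1 p.1.2.2.1 p.1.2.2.2 p.2⟩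
  invFun ν := ⟨⟨fun s => max (α (s+1)) (β (s+1)) + min (α s) (β s) - ν.1 (s+1),
      invk_mem hα hβ ν.1 ν.2.1 ν.2.2.1 ν.2.2.2⟩,
    ν.1 0 - max (α 0) (β 0)⟩
  left_inv p := by
    obtain ⟨⟨κ, hκ, h1, h2⟩, g⟩ := p
    have hub : ∀ s, max (α (s+1)) (β (s+1)) ≤ κ s ∧ κ s ≤ min (α s) (β s) := fun s =>
      ⟨max_le (h1 s).1 (h2 s).1, le_min (h1 s).2 (h2 s).2⟩
    refine Prod.ext (Subtype.ext (funext fun s => ?_)) ?_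
    · show max (α (s+1)) (β (s+1)) + min (α s) (β s) - rowRSK α β κ g (s+1) = κ s
      show max (α (s+1)) (β (s+1)) + min (α s) (β s) -
        (max (α (s+1)) (β (s+1)) + min (α s) (β s) - κ s) = κ s
      have := hub s; omega
    · show rowRSK α β κ g 0 - max (α 0) (β 0) = g
      show max (α 0) (β 0) + g - max (α 0) (β 0) = g
      omega
  right_inv ν := by
    obtain ⟨ν, hν, h1, h2⟩ := ν
    have hub : ∀ s, max (α (s+1)) (β (s+1)) ≤ ν (s+1) ∧ ν (s+1) ≤ min (α s) (β s) :=
      fun s => ⟨max_le (h1 (s+1)).2 (h2 (s+1)).2, le_min (h1 s).1 (h2 s).1⟩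
    apply Subtype.ext; funext i
    cases i with
    | zero =>
      show max (α 0) (β 0) + (ν 0 - max (α 0) (β 0)) = ν 0
      have h3 : α 0 ≤ ν 0 := (h1 0).2
      have h4 : β 0 ≤ ν 0 := (h2 0).2
      omega
    | succ s =>
      show max (α (s+1)) (β (s+1)) + min (α s) (β s) -
        (max (α (s+1)) (β (s+1)) + min (α s) (β s) - ν (s+1)) = ν (s+1)
      have := hub s; omega

lemma X_pow_mul_X_pow (p q : ℕ) :
    (MvPowerSeries.X 0 : MvPowerSeries (Fin 2) ℚ) ^ p * MvPowerSeries.X 1 ^ q =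
      MvPowerSeries.monomial (Finsupp.single 0 p + Finsupp.single 1 q) 1 := by
  rw [MvPowerSeries.X_pow_eq, MvPowerSeries.X_pow_eq, MvPowerSeries.monomial_mul_monomial,
    one_mul]

lemma X1_pow_mul_X0_pow (p q : ℕ) :
    (MvPowerSeries.X 1 : MvPowerSeries (Fin 2) ℚ) ^ p * MvPowerSeries.X 0 ^ q =
      MvPowerSeries.monomial (Finsupp.single 0 q + Finsupp.single 1 p) 1 := by
  rw [MvPowerSeries.X_pow_eq, MvPowerSeries.X_pow_eq, MvPowerSeries.monomial_mul_monomial,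
    one_mul, add_comm]

end Stmt3Aux

set_option maxHeartbeats 1600000 in
open Filter MeasureTheory in

theorem stmt3 (α β : ℕ → ℕ) (hα : IsPartition α) (hβ : IsPartition β) :
    (∑' ν : {ν : ℕ → ℕ // IsPartition ν ∧ Interlaces α ν ∧ Interlaces β ν},
        (MvPowerSeries.X 0 : MvPowerSeries (Fin 2) ℚ) ^ (psum ν.1 - psum α) *
          MvPowerSeries.X 1 ^ (psum ν.1 - psum β)) =
      (1 - MvPowerSeries.X 0 * MvPowerSeries.X 1 : MvPowerSeries (Fin 2) ℚ)⁻¹ *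
        ∑' κ : {κ : ℕ → ℕ // IsPartition κ ∧ Interlaces κ α ∧ Interlaces κ β},
          (MvPowerSeries.X 1 : MvPowerSeries (Fin 2) ℚ) ^ (psum α - psum κ.1) *
            MvPowerSeries.X 0 ^ (psum β - psum κ.1) := by
  classical
  set K := {κ : ℕ → ℕ // IsPartition κ ∧ Interlaces κ α ∧ Interlaces κ β} with hK
  haveI : Finite K := kfin hα
  haveI : Fintype K := Fintype.ofFinite _
  -- notation
  set d : Fin 2 →₀ ℕ := Finsupp.single 0 1 + Finsupp.single 1 1 with hd
  set expo : K × ℕ → (Fin 2 →₀ ℕ) := fun p =>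
    Finsupp.single 0 (p.2 + (psum β - psum p.1.1)) +
      Finsupp.single 1 (p.2 + (psum α - psum p.1.1)) with hexpo
  set base : K → (Fin 2 →₀ ℕ) := fun κ =>
    Finsupp.single 0 (psum β - psum κ.1) + Finsupp.single 1 (psum α - psum κ.1) with hbase
  set F : K × ℕ → MvPowerSeries (Fin 2) ℚ := fun p => MvPowerSeries.monomial (expo p) 1
    with hF
  have hka : ∀ κ : K, psum κ.1 ≤ psum α :=
    fun κ => psum_le_psum' (fun i => (κ.2.2.1 i).2) hα.2
  have hkb : ∀ κ : K, psum κ.1 ≤ psum β :=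
    fun κ => psum_le_psum' (fun i => (κ.2.2.2 i).2) hβ.2
  -- exponents of the image under rowRSK
  have hexp : ∀ (κ : K) (g : ℕ),
      psum (rowRSK α β κ.1 g) - psum α = g + (psum β - psum κ.1) ∧
      psum (rowRSK α β κ.1 g) - psum β = g + (psum α - psum κ.1) := by
    intro κ g
    have h := rowRSK_psum hα hβ κ.2.1 κ.2.2.1 κ.2.2.2 g
    have h1 := hka κ
    have h2 := hkb κ
    omega
  -- Step 1 : LHS = ∑' p, F p
  have step1 : (∑' ν : {ν : ℕ → ℕ // IsPartition ν ∧ Interlaces α ν ∧ Interlaces β ν},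
        (MvPowerSeries.X 0 : MvPowerSeries (Fin 2) ℚ) ^ (psum ν.1 - psum α) *
          MvPowerSeries.X 1 ^ (psum ν.1 - psum β)) = ∑' p : K × ℕ, F p := by
    rw [← Equiv.tsum_eq (rskEquiv hα hβ)]
    refine tsum_congr fun p => ?_
    obtain ⟨κ, g⟩ := p
    have h := hexp κ g
    show (MvPowerSeries.X 0 : MvPowerSeries (Fin 2) ℚ) ^ (psum (rowRSK α β κ.1 g) - psum α) *
      MvPowerSeries.X 1 ^ (psum (rowRSK α β κ.1 g) - psum β) = _
    rw [h.1, h.2, X_pow_mul_X_pow]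
  -- coefficient of F
  have hcoeffF : ∀ (m : Fin 2 →₀ ℕ) (p : K × ℕ),
      MvPowerSeries.coeff m (F p) = if m = expo p then (1:ℚ) else 0 := by
    intro m p
    simp [hF, MvPowerSeries.coeff_monomial]
  -- support bound : nonzero coefficient forces p.2 ≤ m 0
  have hexpo0 : ∀ p : K × ℕ, expo p 0 = p.2 + (psum β - psum p.1.1) := by
    intro p
    simp [hexpo, Finsupp.single_apply]
  have hsupp : ∀ (m : Fin 2 →₀ ℕ), ∀ p : K × ℕ,
      p ∉ (Finset.univ : Finset K) ×ˢ Finset.range (m 0 + 1) →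
      MvPowerSeries.coeff m (F p) = 0 := by
    intro m p hp
    rw [hcoeffF]
    rw [if_neg]
    intro hm
    apply hp
    have := hexpo0 p
    rw [← hm] at this
    simp only [Finset.mem_product, Finset.mem_univ, Finset.mem_range, true_and]
    omega
  -- summability of coefficients
  have hsumm : ∀ (m : Fin 2 →₀ ℕ), Summable (fun p : K × ℕ => MvPowerSeries.coeff m (F p)) :=
    fun m => summable_of_ne_finset_zero (hsupp m)
  have hSummF : Summable F := by
    have : Summable F ↔ ∀ m, Summable fun p : K × ℕ => MvPowerSeries.coeff m (F p) := by
      simp only [MvPowerSeries.coeff_apply]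
      exact Pi.summable
    exact this.mpr hsumm
  set L : MvPowerSeries (Fin 2) ℚ := ∑' p : K × ℕ, F p with hL
  have hcoeffL : ∀ m : Fin 2 →₀ ℕ,
      MvPowerSeries.coeff m L = ∑' p : K × ℕ, (if m = expo p then (1:ℚ) else 0) := by
    intro m
    have : MvPowerSeries.coeff m L = ∑' p : K × ℕ, MvPowerSeries.coeff m (F p) := by
      simp only [MvPowerSeries.coeff_apply, hL]
      exact tsum_apply hSummF
    rw [this]
    exact tsum_congr fun p => hcoeffF m p
  -- fiberwise summability in ℚ
  have hfib : ∀ (m : Fin 2 →₀ ℕ) (κ : K),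
      Summable (fun g : ℕ => if m = expo (κ, g) then (1:ℚ) else 0) := by
    intro m κ
    apply summable_of_ne_finset_zero (s := Finset.range (m 0 + 1))
    intro g hg
    rw [if_neg]
    intro hm
    apply hg
    have := hexpo0 (κ, g)
    rw [← hm] at this
    simp only [Finset.mem_range]
    omega
  have hsummIf : ∀ m : Fin 2 →₀ ℕ,
      Summable (fun p : K × ℕ => if m = expo p then (1:ℚ) else 0) := by
    intro m
    apply summable_of_ne_finset_zero (s := (Finset.univ : Finset K) ×ˢ Finset.range (m 0 + 1))
    intro p hp
    rw [if_neg]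
    intro hm
    apply hp
    have := hexpo0 p
    rw [← hm] at this
    simp only [Finset.mem_product, Finset.mem_univ, Finset.mem_range, true_and]
    omega
  have hsplit : ∀ m : Fin 2 →₀ ℕ,
      (∑' p : K × ℕ, (if m = expo p then (1:ℚ) else 0)) =
        ∑ κ : K, ∑' g : ℕ, (if m = expo (κ, g) then (1:ℚ) else 0) := by
    intro m
    have h := Summable.tsum_prod' (f := fun p : K × ℕ => if m = expo p then (1:ℚ) else 0)
      (hsummIf m) (hfib m)
    rw [h]
    exact tsum_fintype _
  -- expo recursion : expo (κ, g+1) = expo (κ, g) + d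
  have hexpoS : ∀ (κ : K) (g : ℕ), expo (κ, g + 1) = expo (κ, g) + d := by
    intro κ g
    simp only [hexpo, hd]
    have e0 : g + 1 + (psum β - psum κ.1) = (g + (psum β - psum κ.1)) + 1 := by omega
    have e1 : g + 1 + (psum α - psum κ.1) = (g + (psum α - psum κ.1)) + 1 := by omega
    rw [e0, e1]
    simp only [Finsupp.single_add]
    abel
  have hbase0 : ∀ κ : K, expo (κ, 0) = base κ := by
    intro κ
    simp [hexpo, hbase]
  -- S, the finite sum on the right
  set S : MvPowerSeries (Fin 2) ℚ := ∑ κ : K, MvPowerSeries.monomial (base κ) 1 with hS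
  have hcoeffS : ∀ m : Fin 2 →₀ ℕ,
      MvPowerSeries.coeff m S = ∑ κ : K, (if m = base κ then (1:ℚ) else 0) := by
    intro m
    rw [hS, map_sum]
    exact Finset.sum_congr rfl fun κ _ => by simp [MvPowerSeries.coeff_monomial]
  -- the RHS tsum equals S
  have step2 : (∑' κ : {κ : ℕ → ℕ // IsPartition κ ∧ Interlaces κ α ∧ Interlaces κ β},
        (MvPowerSeries.X 1 : MvPowerSeries (Fin 2) ℚ) ^ (psum α - psum κ.1) *
          MvPowerSeries.X 0 ^ (psum β - psum κ.1)) = S := by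
    rw [hS]
    rw [tsum_fintype]
    exact Finset.sum_congr rfl fun κ _ => by rw [X1_pow_mul_X0_pow]
  -- the key identity
  have hXY : (MvPowerSeries.X 0 : MvPowerSeries (Fin 2) ℚ) * MvPowerSeries.X 1 =
      MvPowerSeries.monomial d 1 := by
    have := X_pow_mul_X_pow 1 1
    simpa using this
  have key : (1 - MvPowerSeries.X 0 * MvPowerSeries.X 1 : MvPowerSeries (Fin 2) ℚ) * L = S := by
    ext m
    rw [sub_mul, one_mul, map_sub, hXY, MvPowerSeries.coeff_monomial_mul, hcoeffS, hcoeffL,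
      hsplit]
    have hshift : (if d ≤ m then
        (1:ℚ) * MvPowerSeries.coeff (m - d) L else 0) =
        ∑ κ : K, ∑' g : ℕ, (if m = expo (κ, g + 1) then (1:ℚ) else 0) := by
      by_cases hdm : d ≤ m
      · rw [if_pos hdm, one_mul, hcoeffL, hsplit]
        refine Finset.sum_congr rfl fun κ _ => tsum_congr fun g => ?_
        rw [hexpoS]
        congr 1
        simp only [eq_iff_iff]
        constructor
        · intro h; rw [tsub_eq_iff_eq_add_of_le hdm] at h; rw [h]
        · intro h; rw [tsub_eq_iff_eq_add_of_le hdm]; exact h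
      · rw [if_neg hdm]
        symm
        refine Finset.sum_eq_zero fun κ _ => ?_
        have hz : ∀ g : ℕ, (if m = expo (κ, g + 1) then (1:ℚ) else 0) = 0 := by
          intro g
          rw [if_neg]
          intro hm
          apply hdm
          rw [hm, hexpoS]
          exact le_add_self
        calc ∑' g : ℕ, (if m = expo (κ, g + 1) then (1:ℚ) else 0)
            = ∑' _ : ℕ, (0:ℚ) := tsum_congr hz
          _ = 0 := tsum_zero
    rw [hshift]
    rw [← Finset.sum_sub_distrib]
    refine Finset.sum_congr rfl fun κ _ => ?_
    have := Summable.tsum_eq_zero_add (hfib m κ)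
    rw [this]
    rw [hbase0]
    have : (if m = expo (κ, 0) then (1:ℚ) else 0) = (if m = base κ then (1:ℚ) else 0) := by
      rw [hbase0]
    rw [← this]
    have harr : ∀ x y : ℚ, x + y - y = x := fun x y => by ring
    exact harr _ _
  -- conclude
  have hc : MvPowerSeries.constantCoeff
      (1 - MvPowerSeries.X 0 * MvPowerSeries.X 1 : MvPowerSeries (Fin 2) ℚ) ≠ 0 := by
    simp
  rw [step1, step2, ← key, ← mul_assoc, MvPowerSeries.inv_mul_cancel _ hc, one_mul]


/-! ## Statements 4,5 -/


end
end

section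
/- Let α, β, κ be partitions with α ≻ κ ≺ β and G ∈ ℕ. Set ℓ−1 = min(ℓ(α), ℓ(β)), G_ℓ = G, and for s = ℓ, ℓ−1, …, 1 define ν_s = min(max(α_s, β_s) + G_s, κ_{s-1}) (with κ_0 = +∞ interpreted so that ν_1 = max(α_1,β_1)+G_1) and G_{s-1} = G_s − min(G_s, κ_{s-1} − max(α_s, β_s)) + min(α_{s-1}, β_{s-1}) − κ_{s-1}. Then the output ν is a partition satisfying α ≺ ν ≻ β and |κ| + |ν| = |α| + |β| + G. -/
open scoped Classical

noncomputable section

-- auxiliary lemmas to be inserted before stmt4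

lemma plen_zero {a : ℕ → ℕ} (h : IsPartition a) : ∀ i, plen a ≤ i → a i = 0 := by
  have hne : {N | ∀ i, N ≤ i → a i = 0}.Nonempty := h.2
  exact Nat.sInf_mem hne

lemma part_anti {a : ℕ → ℕ} (h : IsPartition a) : Antitone a :=
  antitone_nat_of_succ_le h.1

lemma psum_eq {a : ℕ → ℕ} {N : ℕ} (h : ∀ i, N ≤ i → a i = 0) :
    psum a = ∑ i ∈ Finset.range N, a i := by
  refine tsum_eq_sum ?_
  intro b hb
  exact h b (by simp [Finset.mem_range] at hb; omega)

lemma colG_top (α β κ : ℕ → ℕ) (G s : ℕ) (hs : min (plen α) (plen β) ≤ s) :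
    colG α β κ G s = G := by
  unfold colG
  rw [Nat.sub_eq_zero_of_le hs]
  rfl

lemma colG_step (α β κ : ℕ → ℕ) (G s : ℕ) (hs : s < min (plen α) (plen β)) :
    colG α β κ G s =
      colG α β κ G (s + 1) -
          min (colG α β κ G (s + 1)) (κ s - max (α (s + 1)) (β (s + 1)))
        + (min (α s) (β s) - κ s) := by
  set L := min (plen α) (plen β) with hL
  have h1 : L - s = (L - (s + 1)) + 1 := by omega
  have h2 : L - (L - (s + 1) + 1) = s := by omega
  unfold colG
  rw [← hL, h1, Gdesc, h2]
open Filter MeasureTheory in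

theorem stmt4 (α β κ : ℕ → ℕ) (hα : IsPartition α) (hβ : IsPartition β) (hκ : IsPartition κ)
    (hκα : Interlaces κ α) (hκβ : Interlaces κ β) (G : ℕ) :
    IsPartition (colRSK α β κ G) ∧ Interlaces α (colRSK α β κ G) ∧
      Interlaces β (colRSK α β κ G) ∧
      psum κ + psum (colRSK α β κ G) = psum α + psum β + G := by
  set ν := colRSK α β κ G with hνdef
  have hα0 : ∀ i, plen α ≤ i → α i = 0 := plen_zero hα
  have hβ0 : ∀ i, plen β ≤ i → β i = 0 := plen_zero hβ
  have hmL : min (α (min (plen α) (plen β))) (β (min (plen α) (plen β))) = 0 := by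
    rcases le_total (plen α) (plen β) with h | h
    · have := hα0 (min (plen α) (plen β)) (by omega)
      omega
    · have := hβ0 (min (plen α) (plen β)) (by omega)
      omega
  have hκ0 : ∀ i, min (plen α) (plen β) ≤ i → κ i = 0 := by
    intro i hi
    have h1 : κ i ≤ κ (min (plen α) (plen β)) := part_anti hκ hi
    have h2 := (hκα (min (plen α) (plen β))).2
    have h3 := (hκβ (min (plen α) (plen β))).2
    omega
  have hαL : ∀ i, min (plen α) (plen β) + 1 ≤ i → α i = 0 := by
    intro i hi
    obtain ⟨s, rfl⟩ : ∃ s, i = s + 1 := ⟨i - 1, by omega⟩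
    have := (hκα s).1
    have := hκ0 s (by omega)
    omega
  have hβL : ∀ i, min (plen α) (plen β) + 1 ≤ i → β i = 0 := by
    intro i hi
    obtain ⟨s, rfl⟩ : ∃ s, i = s + 1 := ⟨i - 1, by omega⟩
    have := (hκβ s).1
    have := hκ0 s (by omega)
    omega
  have hν0 : ν 0 = max (α 0) (β 0) + colG α β κ G 0 := rfl
  have hνs : ∀ s, ν (s + 1) = min (max (α (s + 1)) (β (s + 1)) + colG α β κ G (s + 1)) (κ s) :=
    fun s => rfl
  have hκν : ∀ i, κ i ≤ ν i := by
    intro i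
    cases i with
    | zero =>
      have := (hκα 0).2
      rw [hν0]; omega
    | succ s =>
      rw [hνs]
      have h1 : κ (s + 1) ≤ κ s := hκ.1 s
      have h2 := (hκα (s + 1)).2
      omega
  have hνκ : ∀ i, ν (i + 1) ≤ κ i := by
    intro i; rw [hνs]; omega
  have hνzero : ∀ i, min (plen α) (plen β) + 1 ≤ i → ν i = 0 := by
    intro i hi
    obtain ⟨s, rfl⟩ : ∃ s, i = s + 1 := ⟨i - 1, by omega⟩
    have := hνs s
    have := hκ0 s (by omega)
    omega
  have hdec : ∀ i, ν (i + 1) ≤ ν i := fun i => le_trans (hνκ i) (hκν i)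
  refine ⟨⟨hdec, min (plen α) (plen β) + 1, hνzero⟩, ?_, ?_, ?_⟩
  · intro i
    refine ⟨le_trans (hνκ i) (hκα i).2, ?_⟩
    cases i with
    | zero => rw [hν0]; omega
    | succ s =>
      rw [hνs]
      have := (hκα s).1
      omega
  · intro i
    refine ⟨le_trans (hνκ i) (hκβ i).2, ?_⟩
    cases i with
    | zero => rw [hν0]; omega
    | succ s =>
      rw [hνs]
      have := (hκβ s).1
      omega
  · -- the sum identity
    have key : ∀ t, t ≤ min (plen α) (plen β) →
        ∑ s ∈ Finset.range t, ν (s + 1) + ∑ s ∈ Finset.range t, κ s + colG α β κ G 0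
          = ∑ s ∈ Finset.range t, (max (α (s + 1)) (β (s + 1)) + min (α s) (β s))
            + colG α β κ G t := by
      intro t
      induction t with
      | zero => simp
      | succ t ih =>
        intro ht
        have ht' : t < min (plen α) (plen β) := by omega
        have h1 := ih (by omega)
        have h2 := colG_step α β κ G t ht'
        have h3 := hνs t
        have h4 := (hκα t).1
        have h5 := (hκβ t).1
        have h6 := (hκα t).2
        have h7 := (hκβ t).2
        rw [Finset.sum_range_succ, Finset.sum_range_succ, Finset.sum_range_succ]
        omega
    have hkey := key (min (plen α) (plen β)) le_rfl
    rw [colG_top α β κ G _ le_rfl] at hkey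
    have hpν : psum ν = ∑ i ∈ Finset.range (min (plen α) (plen β) + 1), ν i :=
      psum_eq hνzero
    have hpκ : psum κ = ∑ i ∈ Finset.range (min (plen α) (plen β) + 1), κ i :=
      psum_eq (fun i hi => hκ0 i (by omega))
    have hpα : psum α = ∑ i ∈ Finset.range (min (plen α) (plen β) + 1), α i :=
      psum_eq hαL
    have hpβ : psum β = ∑ i ∈ Finset.range (min (plen α) (plen β) + 1), β i :=
      psum_eq hβL
    have e1 : ∑ i ∈ Finset.range (min (plen α) (plen β) + 1), ν i
        = (∑ s ∈ Finset.range (min (plen α) (plen β)), ν (s + 1)) + ν 0 :=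
      Finset.sum_range_succ' ν _
    have e2 : ∑ i ∈ Finset.range (min (plen α) (plen β) + 1), κ i
        = ∑ s ∈ Finset.range (min (plen α) (plen β)), κ s + κ (min (plen α) (plen β)) :=
      Finset.sum_range_succ κ _
    have e3 : ∑ s ∈ Finset.range (min (plen α) (plen β)),
          (max (α (s + 1)) (β (s + 1)) + min (α s) (β s))
        = (∑ s ∈ Finset.range (min (plen α) (plen β)), max (α (s + 1)) (β (s + 1)))
          + ∑ s ∈ Finset.range (min (plen α) (plen β)), min (α s) (β s) :=
      Finset.sum_add_distrib
    have e5 : ∑ i ∈ Finset.range (min (plen α) (plen β) + 1), (α i + β i)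
        = ∑ i ∈ Finset.range (min (plen α) (plen β) + 1),
            (max (α i) (β i) + min (α i) (β i)) := by
      refine Finset.sum_congr rfl fun i _ => ?_
      omega
    have e6 : ∑ i ∈ Finset.range (min (plen α) (plen β) + 1),
          (max (α i) (β i) + min (α i) (β i))
        = (∑ i ∈ Finset.range (min (plen α) (plen β) + 1), max (α i) (β i))
          + ∑ i ∈ Finset.range (min (plen α) (plen β) + 1), min (α i) (β i) :=
      Finset.sum_add_distrib
    have e4 : ∑ i ∈ Finset.range (min (plen α) (plen β) + 1), (α i + β i)
        = (∑ i ∈ Finset.range (min (plen α) (plen β) + 1), α i)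
          + ∑ i ∈ Finset.range (min (plen α) (plen β) + 1), β i :=
      Finset.sum_add_distrib
    have e7 : ∑ i ∈ Finset.range (min (plen α) (plen β) + 1), max (α i) (β i)
        = (∑ s ∈ Finset.range (min (plen α) (plen β)), max (α (s + 1)) (β (s + 1)))
          + max (α 0) (β 0) :=
      Finset.sum_range_succ' _ _
    have e8 : ∑ i ∈ Finset.range (min (plen α) (plen β) + 1), min (α i) (β i)
        = ∑ s ∈ Finset.range (min (plen α) (plen β)), min (α s) (β s)
          + min (α (min (plen α) (plen β))) (β (min (plen α) (plen β))) :=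
      Finset.sum_range_succ _ _
    have hκL := hκ0 (min (plen α) (plen β)) le_rfl
    rw [hpκ, hpν, hpα, hpβ]
    omega

end
end

section
/- Let (w_{i,j})_{1≤i≤m,1≤j≤n} be non-negative integers and apply the rowRSK local growth rule inductively on the m × n grid starting from empty partitions on the axes, yielding the partition λ = λ^{(m,n)} at the outer corner. Then λ_1 equals the maximum, over up-right lattice paths π from the square (1,1) to the square (m,n), of Σ_{(i,j)∈π} w_{i,j}. -/
open scoped Classical

noncomputable section

lemma growRow_zl (w : ℕ → ℕ → ℕ) (j k : ℕ) : growRow w 0 j k = 0 := by simp [growRow]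
lemma growRow_zr (w : ℕ → ℕ → ℕ) (i k : ℕ) : growRow w (i+1) 0 k = 0 := by simp [growRow]
lemma growRow_rec (w : ℕ → ℕ → ℕ) (i j : ℕ) :
    growRow w (i+1) (j+1) 0
      = max (growRow w i (j+1) 0) (growRow w (i+1) j 0) + w (i+1) (j+1) := by
  rw [growRow]; rfl

lemma upRight_mono {p : ℕ → ℕ × ℕ} {L : ℕ} (h : UpRight p L) :
    ∀ k ≤ L, ∀ j ≤ k, (p j).1 ≤ (p k).1 ∧ (p j).2 ≤ (p k).2 := by
  intro k
  induction k with
  | zero => intro _ j hj; interval_cases j; exact ⟨le_rfl, le_rfl⟩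
  | succ k ih =>
    intro hk j hj
    rcases Nat.lt_or_ge j (k+1) with hjk | hjk
    · have h1 := ih (by omega) j (by omega)
      rcases h k (by omega) with hs | hs <;> rw [hs] <;> simp <;> omega
    · have : j = k+1 := by omega
      subst this; exact ⟨le_rfl, le_rfl⟩

lemma extend_right (w : ℕ → ℕ → ℕ) (a b : ℕ) (p : ℕ → ℕ × ℕ)
    (hu : UpRight p (a+b)) (h0 : p 0 = (1,1)) (he : p (a+b) = (a+1, b+1))
    (hbd : ∀ k ≤ a+b, 1 ≤ (p k).1 ∧ (p k).1 ≤ a+1 ∧ 1 ≤ (p k).2 ∧ (p k).2 ≤ b+1) :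
    ∃ q : ℕ → ℕ × ℕ, UpRight q (a+b+1) ∧ q 0 = (1,1) ∧ q (a+b+1) = (a+2, b+1) ∧
      (∀ k ≤ a+b+1, 1 ≤ (q k).1 ∧ (q k).1 ≤ a+2 ∧ 1 ≤ (q k).2 ∧ (q k).2 ≤ b+1) ∧
      ∑ k ∈ Finset.range (a+b+2), w (q k).1 (q k).2
        = (∑ k ∈ Finset.range (a+b+1), w (p k).1 (p k).2) + w (a+2) (b+1) := by
  have hne : ¬ (a+b+1 ≤ a+b) := by omega
  refine ⟨fun k => if k ≤ a+b then p k else (a+2, b+1), ?_, ?_, ?_, ?_, ?_⟩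
  · intro k hk
    by_cases h : k < a + b
    · simp only [if_pos (by omega : k ≤ a+b), if_pos (by omega : k+1 ≤ a+b)]
      exact hu k h
    · have hk' : k = a+b := by omega
      subst hk'
      left
      simp only [if_pos le_rfl, if_neg hne, he]
  · simp only [if_pos (Nat.zero_le _), h0]
  · simp only [if_neg hne]
  · intro k hk
    by_cases h : k ≤ a+b
    · simp only [if_pos h]; have := hbd k h; omega
    · simp only [if_neg h]; simp
  · rw [Finset.sum_range_succ]
    congr 1
    · refine Finset.sum_congr rfl fun k hk => ?_
      simp only [Finset.mem_range] at hk
      simp only [if_pos (show k ≤ a+b by omega)]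
    · simp only [if_neg hne]

lemma extend_up (w : ℕ → ℕ → ℕ) (a b : ℕ) (p : ℕ → ℕ × ℕ)
    (hu : UpRight p (a+b)) (h0 : p 0 = (1,1)) (he : p (a+b) = (a+1, b+1))
    (hbd : ∀ k ≤ a+b, 1 ≤ (p k).1 ∧ (p k).1 ≤ a+1 ∧ 1 ≤ (p k).2 ∧ (p k).2 ≤ b+1) :
    ∃ q : ℕ → ℕ × ℕ, UpRight q (a+b+1) ∧ q 0 = (1,1) ∧ q (a+b+1) = (a+1, b+2) ∧
      (∀ k ≤ a+b+1, 1 ≤ (q k).1 ∧ (q k).1 ≤ a+1 ∧ 1 ≤ (q k).2 ∧ (q k).2 ≤ b+2) ∧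
      ∑ k ∈ Finset.range (a+b+2), w (q k).1 (q k).2
        = (∑ k ∈ Finset.range (a+b+1), w (p k).1 (p k).2) + w (a+1) (b+2) := by
  have hne : ¬ (a+b+1 ≤ a+b) := by omega
  refine ⟨fun k => if k ≤ a+b then p k else (a+1, b+2), ?_, ?_, ?_, ?_, ?_⟩
  · intro k hk
    by_cases h : k < a + b
    · simp only [if_pos (by omega : k ≤ a+b), if_pos (by omega : k+1 ≤ a+b)]
      exact hu k h
    · have hk' : k = a+b := by omega
      subst hk'
      right
      simp only [if_pos le_rfl, if_neg hne, he]
  · simp only [if_pos (Nat.zero_le _), h0]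
  · simp only [if_neg hne]
  · intro k hk
    by_cases h : k ≤ a+b
    · simp only [if_pos h]; have := hbd k h; omega
    · simp only [if_neg h]; simp
  · rw [Finset.sum_range_succ]
    congr 1
    · refine Finset.sum_congr rfl fun k hk => ?_
      simp only [Finset.mem_range] at hk
      simp only [if_pos (show k ≤ a+b by omega)]
    · simp only [if_neg hne]

lemma greene_ub (w : ℕ → ℕ → ℕ) : ∀ (L a b : ℕ), a + b = L → ∀ p : ℕ → ℕ × ℕ,
    UpRight p (a+b) → p 0 = (1,1) → p (a+b) = (a+1, b+1) →
    (∀ k ≤ a+b, 1 ≤ (p k).1 ∧ (p k).1 ≤ a+1 ∧ 1 ≤ (p k).2 ∧ (p k).2 ≤ b+1) →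
    ∑ k ∈ Finset.range (a+b+1), w (p k).1 (p k).2 ≤ growRow w (a+1) (b+1) 0 := by
  intro L
  induction L with
  | zero =>
    intro a b hab p hu h0 he hbd
    obtain ⟨rfl, rfl⟩ : a = 0 ∧ b = 0 := by omega
    rw [growRow_rec, growRow_zl, growRow_zr]
    simp [Finset.sum_range_one, h0]
  | succ L ih =>
    intro a b hab p hu h0 he hbd
    have hpL1 : p (L+1) = (a+1, b+1) := by rw [← hab]; exact he
    rcases hu L (by omega) with hs | hs
    · rw [hpL1] at hs
      have h1a : a + 1 = (p L).1 + 1 := congrArg Prod.fst hs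
      have h1b : b + 1 = (p L).2 := congrArg Prod.snd hs
      have ha1 : 1 ≤ (p L).1 := (hbd L (by omega)).1
      obtain ⟨a', rfl⟩ : ∃ a', a = a' + 1 := ⟨a - 1, by omega⟩
      have hpL : p L = (a' + 1, b + 1) := by
        refine Prod.ext_iff.mpr ⟨?_, ?_⟩ <;> simp <;> omega
      have e : a' + 1 + b = a' + b + 1 := by omega
      rw [e] at hu he hbd ⊢
      have hpe : p (a' + b) = (a' + 1, b + 1) := by
        rw [show a' + b = L by omega]; exact hpL
      have hub := ih a' b (by omega) p (fun k hk => hu k (by omega)) h0 hpe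
        (fun k hk => by
          have hb := hbd k (by omega)
          have hm := upRight_mono hu (a'+b) (by omega) k hk
          rw [hpe] at hm
          simp at hm
          omega)
      have hpL1' : p (a'+b+1) = (a'+1+1, b+1) := by
        rw [show a'+b+1 = L+1 by omega]; exact hpL1
      rw [Finset.sum_range_succ, growRow_rec, hpL1']
      exact Nat.add_le_add (hub.trans (le_max_left _ _)) le_rfl
    · rw [hpL1] at hs
      have h1a : a + 1 = (p L).1 := congrArg Prod.fst hs
      have h1b : b + 1 = (p L).2 + 1 := congrArg Prod.snd hs
      have hb1 : 1 ≤ (p L).2 := (hbd L (by omega)).2.2.1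
      obtain ⟨b', rfl⟩ : ∃ b', b = b' + 1 := ⟨b - 1, by omega⟩
      have hpL : p L = (a + 1, b' + 1) := by
        refine Prod.ext_iff.mpr ⟨?_, ?_⟩ <;> simp <;> omega
      have hpe : p (a + b') = (a + 1, b' + 1) := by
        rw [show a + b' = L by omega]; exact hpL
      have hub := ih a b' (by omega) p (fun k hk => hu k (by omega)) h0 hpe
        (fun k hk => by
          have hb := hbd k (by omega)
          have hm := upRight_mono hu (a+b') (by omega) k hk
          rw [hpe] at hm
          simp at hm
          omega)
      have hpL1' : p (a+b'+1) = (a+1, b'+1+1) := by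
        rw [show a+b'+1 = L+1 by omega]; exact hpL1
      rw [show a+(b'+1)+1 = a+b'+1+1 by omega, Finset.sum_range_succ, growRow_rec, hpL1']
      exact Nat.add_le_add (hub.trans (le_max_right _ _)) le_rfl

lemma greene_mem (w : ℕ → ℕ → ℕ) : ∀ (L a b : ℕ), a + b = L → ∃ p : ℕ → ℕ × ℕ,
    UpRight p (a+b) ∧ p 0 = (1,1) ∧ p (a+b) = (a+1, b+1) ∧
    (∀ k ≤ a+b, 1 ≤ (p k).1 ∧ (p k).1 ≤ a+1 ∧ 1 ≤ (p k).2 ∧ (p k).2 ≤ b+1) ∧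
    growRow w (a+1) (b+1) 0 = ∑ k ∈ Finset.range (a+b+1), w (p k).1 (p k).2 := by
  intro L
  induction L with
  | zero =>
    intro a b hab
    obtain ⟨rfl, rfl⟩ : a = 0 ∧ b = 0 := by omega
    refine ⟨fun _ => (1,1), fun k hk => absurd hk (by omega), rfl, rfl,
      fun k hk => by simp, ?_⟩
    rw [growRow_rec, growRow_zl, growRow_zr]
    simp [Finset.sum_range_one]
  | succ L ih =>
    intro a b hab
    match a, b with
    | 0, b + 1 =>
      obtain ⟨p, hu, h0, he, hbd, hsum⟩ := ih 0 b (by omega)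
      obtain ⟨q, hu', h0', he', hbd', hsum'⟩ := extend_up w 0 b p hu h0 he hbd
      refine ⟨q, hu', h0', he', hbd', ?_⟩
      rw [growRow_rec, growRow_zl]
      have hs2 : ∑ k ∈ Finset.range (0+(b+1)+1), w (q k).1 (q k).2
          = (∑ k ∈ Finset.range (0+b+1), w (p k).1 (p k).2) + w (0+1) (b+1+1) := hsum'
      rw [hs2, ← hsum]
      omega
    | a + 1, 0 =>
      obtain ⟨p, hu, h0, he, hbd, hsum⟩ := ih a 0 (by omega)
      obtain ⟨q, hu', h0', he', hbd', hsum'⟩ := extend_right w a 0 p hu h0 he hbd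
      have e1 : a + 1 + 0 = a + 0 + 1 := by omega
      refine ⟨q, by rw [e1]; exact hu', h0', by rw [e1]; exact he', ?_, ?_⟩
      · intro k hk; exact hbd' k (by omega)
      · rw [growRow_rec, growRow_zr]
        have hs2 : ∑ k ∈ Finset.range (a+1+0+1), w (q k).1 (q k).2
            = (∑ k ∈ Finset.range (a+0+1), w (p k).1 (p k).2) + w (a+1+1) (0+1) := hsum'
        rw [hs2, ← hsum]
        omega
    | a + 1, b + 1 =>
      rcases le_total (growRow w (a+1+1) (b+1) 0) (growRow w (a+1) (b+1+1) 0) with hle | hle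
      · obtain ⟨p, hu, h0, he, hbd, hsum⟩ := ih a (b+1) (by omega)
        obtain ⟨q, hu', h0', he', hbd', hsum'⟩ := extend_right w a (b+1) p hu h0 he hbd
        have e1 : a + 1 + (b + 1) = a + (b + 1) + 1 := by omega
        refine ⟨q, by rw [e1]; exact hu', h0', by rw [e1]; exact he', ?_, ?_⟩
        · intro k hk; exact hbd' k (by omega)
        · rw [growRow_rec]
          rw [show a+1+(b+1)+1 = a+(b+1)+2 by omega]
          have hs2 : ∑ k ∈ Finset.range (a+(b+1)+2), w (q k).1 (q k).2
              = (∑ k ∈ Finset.range (a+(b+1)+1), w (p k).1 (p k).2) + w (a+1+1) (b+1+1) :=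
            hsum'
          rw [hs2, ← hsum]
          omega
      · obtain ⟨p, hu, h0, he, hbd, hsum⟩ := ih (a+1) b (by omega)
        obtain ⟨q, hu', h0', he', hbd', hsum'⟩ := extend_up w (a+1) b p hu h0 he hbd
        refine ⟨q, hu', h0', he', hbd', ?_⟩
        rw [growRow_rec]
        have hs2 : ∑ k ∈ Finset.range (a+1+(b+1)+1), w (q k).1 (q k).2
            = (∑ k ∈ Finset.range (a+1+b+1), w (p k).1 (p k).2) + w (a+1+1) (b+1+1) := hsum'
        rw [hs2, ← hsum]
        omega

open Filter MeasureTheory in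
theorem stmt15 (m n : ℕ) (hm : 0 < m) (hn : 0 < n) (w : ℕ → ℕ → ℕ) :
    IsGreatest
      {s : ℕ | ∃ p : ℕ → ℕ × ℕ, UpRight p (m + n - 2) ∧ p 0 = (1, 1) ∧
        p (m + n - 2) = (m, n) ∧
        (∀ k ≤ m + n - 2, 1 ≤ (p k).1 ∧ (p k).1 ≤ m ∧ 1 ≤ (p k).2 ∧ (p k).2 ≤ n) ∧
        s = ∑ k ∈ Finset.range (m + n - 1), w (p k).1 (p k).2}
      (growRow w m n 0) := by
  obtain ⟨a, rfl⟩ : ∃ a, m = a + 1 := ⟨m - 1, by omega⟩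
  obtain ⟨b, rfl⟩ : ∃ b, n = b + 1 := ⟨n - 1, by omega⟩
  have h2 : a + 1 + (b + 1) - 2 = a + b := by omega
  have h1 : a + 1 + (b + 1) - 1 = a + b + 1 := by omega
  constructor
  · obtain ⟨p, hu, h0, he, hbd, hsum⟩ := greene_mem w (a+b) a b rfl
    refine ⟨p, ?_, h0, ?_, ?_, ?_⟩
    · rw [h2]; exact hu
    · rw [h2]; exact he
    · rw [h2]; exact hbd
    · rw [h1]; exact hsum
  · rintro s ⟨p, hu, h0, he, hbd, rfl⟩
    rw [h2] at hu he hbd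
    rw [h1]
    exact greene_ub w (a+b) a b rfl p hu h0 he hbd

end
end

section
/- Let (w_{i,j})_{1≤i≤m,1≤j≤n} be built from applying the rowRSK (or colRSK) growth rule inductively on the m × n grid with empty partitions on the axes, producing partitions λ^{(i,j)} at all lattice points. Then for each 1 ≤ k ≤ n, the sum of the entries in the k-th row of the matrix equals |λ^{(m,k)}| − |λ^{(m,k-1)}|, and for each 1 ≤ k ≤ m, the sum of the k-th column equals |λ^{(k,n)}| − |λ^{(k-1,n)}|. -/
open scoped Classical

noncomputable section

namespace Stmt17Aux

def fsupp (a : ℕ → ℕ) : Prop := ∃ N, ∀ i, N ≤ i → a i = 0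

lemma fsupp_zero : fsupp (fun _ => 0) := ⟨0, fun _ _ => rfl⟩

lemma psum_eq_sum {a : ℕ → ℕ} {N : ℕ} (h : ∀ i, N ≤ i → a i = 0) :
    psum a = ∑ i ∈ Finset.range N, a i := by
  refine tsum_eq_sum ?_
  intro b hb
  exact h b (by simpa using hb)

lemma psum_zero : psum (fun _ => 0) = 0 := by
  rw [psum_eq_sum (N := 0) (fun _ _ => rfl)]
  simp

lemma plen_spec {a : ℕ → ℕ} (h : fsupp a) : ∀ i, plen a ≤ i → a i = 0 :=
  Nat.sInf_mem (h : Set.Nonempty {N | ∀ i, N ≤ i → a i = 0})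

lemma plen_le {a : ℕ → ℕ} {N : ℕ} (h : ∀ i, N ≤ i → a i = 0) : plen a ≤ N :=
  Nat.sInf_le h

lemma inter_zero : Interlaces (fun _ => 0) (fun _ => 0) :=
  fun _ => ⟨Nat.le_refl _, Nat.le_refl _⟩

/-! ### rowRSK rule properties -/

section RowRule

variable {α β κ : ℕ → ℕ} {G : ℕ}

lemma row_fsupp (hα : fsupp α) (hβ : fsupp β) (hκ : fsupp κ) :
    fsupp (rowRSK α β κ G) := by
  obtain ⟨Na, ha⟩ := hα; obtain ⟨Nb, hb⟩ := hβ
  refine ⟨max Na Nb + 1, ?_⟩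
  intro i hi
  cases i with
  | zero => omega
  | succ t =>
    have h1 : α (t+1) = 0 := ha _ (by omega)
    have h2 : β (t+1) = 0 := hb _ (by omega)
    have h3 : α t = 0 := ha _ (by omega)
    have h4 : β t = 0 := hb _ (by omega)
    simp only [rowRSK, h1, h2, h3, h4]
    omega

lemma row_inter (h1 : Interlaces κ α) (h2 : Interlaces κ β) :
    Interlaces α (rowRSK α β κ G) ∧ Interlaces β (rowRSK α β κ G) := by
  have key : ∀ s, rowRSK α β κ G (s+1) ≤ min (α s) (β s) ∧
      max (α s) (β s) ≤ rowRSK α β κ G s := by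
    intro s
    have h1s := h1 s; have h2s := h2 s
    constructor
    · simp only [rowRSK]
      have h1s' := h1 (s+1); have h2s' := h2 (s+1)
      omega
    · cases s with
      | zero => simp only [rowRSK]; omega
      | succ t =>
        have h1t := h1 t; have h2t := h2 t
        simp only [rowRSK]
        omega
  constructor
  · intro s
    exact ⟨le_trans (key s).1 (min_le_left _ _), le_trans (le_max_left _ _) (key s).2⟩
  · intro s
    exact ⟨le_trans (key s).1 (min_le_right _ _), le_trans (le_max_right _ _) (key s).2⟩

lemma row_sum (h1 : Interlaces κ α) (h2 : Interlaces κ β) (N : ℕ) :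
    ∑ s ∈ Finset.range (N+1), rowRSK α β κ G s + ∑ s ∈ Finset.range N, κ s
      + min (α N) (β N)
    = G + ∑ s ∈ Finset.range (N+1), α s + ∑ s ∈ Finset.range (N+1), β s := by
  induction N with
  | zero =>
    simp only [zero_add, Finset.sum_range_one, Finset.range_zero, Finset.sum_empty]
    have h0 : rowRSK α β κ G 0 = max (α 0) (β 0) + G := rfl
    omega
  | succ N ih =>
    rw [Finset.sum_range_succ (f := rowRSK α β κ G), Finset.sum_range_succ (f := κ),
      Finset.sum_range_succ (f := α), Finset.sum_range_succ (f := β)]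
    have h1N := h1 N; have h2N := h2 N
    have hν : rowRSK α β κ G (N+1)
        = max (α (N+1)) (β (N+1)) + min (α N) (β N) - κ N := rfl
    omega

lemma row_psum (hα : fsupp α) (hβ : fsupp β)
    (h1 : Interlaces κ α) (h2 : Interlaces κ β) :
    psum (rowRSK α β κ G) + psum κ = G + psum α + psum β := by
  obtain ⟨Na, ha⟩ := hα; obtain ⟨Nb, hb⟩ := hβ
  set N := max Na Nb with hN
  have hα0 : ∀ i, N ≤ i → α i = 0 := fun i hi => ha i (by omega)
  have hβ0 : ∀ i, N ≤ i → β i = 0 := fun i hi => hb i (by omega)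
  have hκ0 : ∀ i, N ≤ i → κ i = 0 := by
    intro i hi
    have := (h1 i).2
    have := hα0 i hi
    omega
  have hν0 : ∀ i, N + 1 ≤ i → rowRSK α β κ G i = 0 := by
    intro i hi
    cases i with
    | zero => omega
    | succ t =>
      have e1 := hα0 (t+1) (by omega)
      have e2 := hβ0 (t+1) (by omega)
      have e3 := hα0 t (by omega)
      have e4 := hβ0 t (by omega)
      simp only [rowRSK, e1, e2, e3, e4]
      omega
  rw [psum_eq_sum hν0, psum_eq_sum hκ0,
    psum_eq_sum (fun i hi => hα0 i (by omega) : ∀ i, N + 1 ≤ i → α i = 0),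
    psum_eq_sum (fun i hi => hβ0 i (by omega) : ∀ i, N + 1 ≤ i → β i = 0)]
  have := row_sum (G := G) h1 h2 N
  have hmin : min (α N) (β N) = 0 := by
    have := hα0 N le_rfl
    omega
  omega

end RowRule

/-! ### colRSK rule properties -/

section ColRule

variable {α β κ : ℕ → ℕ} {G : ℕ}

lemma col_fsupp (hα : fsupp α) (hβ : fsupp β) (hκ : fsupp κ) :
    fsupp (colRSK α β κ G) := by
  obtain ⟨Nk, hk⟩ := hκ
  refine ⟨Nk + 1, ?_⟩
  intro i hi
  cases i with
  | zero => omega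
  | succ t =>
    have : κ t = 0 := hk t (by omega)
    simp only [colRSK, this]
    omega

lemma col_inter (h1 : Interlaces κ α) (h2 : Interlaces κ β) :
    Interlaces α (colRSK α β κ G) ∧ Interlaces β (colRSK α β κ G) := by
  have key : ∀ s, colRSK α β κ G (s+1) ≤ min (α s) (β s) ∧
      max (α s) (β s) ≤ colRSK α β κ G s := by
    intro s
    have h1s := h1 s; have h2s := h2 s
    constructor
    · simp only [colRSK]
      omega
    · cases s with
      | zero => simp only [colRSK]; omega
      | succ t =>
        have h1t := h1 t; have h2t := h2 t
        simp only [colRSK]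
        omega
  constructor
  · intro s
    exact ⟨le_trans (key s).1 (min_le_left _ _), le_trans (le_max_left _ _) (key s).2⟩
  · intro s
    exact ⟨le_trans (key s).1 (min_le_right _ _), le_trans (le_max_right _ _) (key s).2⟩

lemma colG_succ (α β κ : ℕ → ℕ) (G s : ℕ) (hs : s < min (plen α) (plen β)) :
    colG α β κ G s
      = colG α β κ G (s+1)
          - min (colG α β κ G (s+1)) (κ s - max (α (s+1)) (β (s+1)))
        + (min (α s) (β s) - κ s) := by
  simp only [colG]
  have h1 : min (plen α) (plen β) - s = (min (plen α) (plen β) - (s+1)) + 1 := by omega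
  rw [h1, Gdesc]
  have h2 : min (plen α) (plen β) - (min (plen α) (plen β) - (s+1) + 1) = s := by omega
  rw [h2]

lemma col_step (hα : fsupp α) (hβ : fsupp β)
    (h1 : Interlaces κ α) (h2 : Interlaces κ β) (s : ℕ) :
    colG α β κ G s + colRSK α β κ G (s+1) + κ s
      = colG α β κ G (s+1) + max (α (s+1)) (β (s+1)) + min (α s) (β s) := by
  have h1s := h1 s; have h2s := h2 s
  rcases lt_or_ge s (min (plen α) (plen β)) with hs | hs
  · rw [colG_succ α β κ G s hs]
    simp only [colRSK]
    omega
  · have hm0 : min (α s) (β s) = 0 := by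
      rcases min_le_iff.mp hs with h | h
      · have := plen_spec hα s h; omega
      · have := plen_spec hβ s h; omega
    have hκ0 : κ s = 0 := by omega
    have hM0 : max (α (s+1)) (β (s+1)) = 0 := by omega
    have hg : colG α β κ G s = colG α β κ G (s+1) := by
      simp only [colG]
      have e1 : min (plen α) (plen β) - s = 0 := by omega
      have e2 : min (plen α) (plen β) - (s+1) = 0 := by omega
      rw [e1, e2]
    have hν : colRSK α β κ G (s+1)
        = min (max (α (s+1)) (β (s+1)) + colG α β κ G (s+1)) (κ s) := rfl
    omega

lemma col_sum (hα : fsupp α) (hβ : fsupp β)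
    (h1 : Interlaces κ α) (h2 : Interlaces κ β) (N : ℕ) :
    ∑ s ∈ Finset.range (N+1), colRSK α β κ G s + ∑ s ∈ Finset.range N, κ s
    = colG α β κ G N + ∑ s ∈ Finset.range (N+1), max (α s) (β s)
        + ∑ s ∈ Finset.range N, min (α s) (β s) := by
  induction N with
  | zero =>
    simp only [zero_add, Finset.sum_range_one, Finset.range_zero, Finset.sum_empty]
    have h0 : colRSK α β κ G 0 = max (α 0) (β 0) + colG α β κ G 0 := rfl
    omega
  | succ N ih =>
    rw [Finset.sum_range_succ (f := colRSK α β κ G), Finset.sum_range_succ (f := κ),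
      Finset.sum_range_succ (f := fun s => max (α s) (β s)),
      Finset.sum_range_succ (f := fun s => min (α s) (β s))]
    have := col_step (G := G) hα hβ h1 h2 N
    omega

lemma col_psum (hα : fsupp α) (hβ : fsupp β)
    (h1 : Interlaces κ α) (h2 : Interlaces κ β) :
    psum (colRSK α β κ G) + psum κ = G + psum α + psum β := by
  obtain ⟨Na, ha⟩ := hα; obtain ⟨Nb, hb⟩ := hβ
  set N := max Na Nb with hN
  have hα0 : ∀ i, N ≤ i → α i = 0 := fun i hi => ha i (by omega)
  have hβ0 : ∀ i, N ≤ i → β i = 0 := fun i hi => hb i (by omega)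
  have hκ0 : ∀ i, N ≤ i → κ i = 0 := by
    intro i hi
    have := (h1 i).2
    have := hα0 i hi
    omega
  have hν0 : ∀ i, N + 1 ≤ i → colRSK α β κ G i = 0 := by
    intro i hi
    cases i with
    | zero => omega
    | succ t =>
      have : κ t = 0 := hκ0 t (by omega)
      simp only [colRSK, this]
      omega
  have hGN : colG α β κ G N = G := by
    simp only [colG]
    have : min (plen α) (plen β) - N = 0 := by
      have := plen_le hα0
      omega
    rw [this]
    rfl
  have hsum := col_sum (G := G) ⟨Na, ha⟩ ⟨Nb, hb⟩ h1 h2 N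
  have hmm : ∑ s ∈ Finset.range (N+1), max (α s) (β s)
      + ∑ s ∈ Finset.range N, min (α s) (β s)
      = ∑ s ∈ Finset.range (N+1), α s + ∑ s ∈ Finset.range (N+1), β s := by
    have hminN : min (α N) (β N) = 0 := by
      have := hα0 N le_rfl
      omega
    have e : ∑ s ∈ Finset.range N, min (α s) (β s)
        = ∑ s ∈ Finset.range (N+1), min (α s) (β s) := by
      rw [Finset.sum_range_succ, hminN, add_zero]
    rw [e, ← Finset.sum_add_distrib, ← Finset.sum_add_distrib]
    refine Finset.sum_congr rfl ?_
    intro s _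
    omega
  rw [psum_eq_sum hν0, psum_eq_sum hκ0,
    psum_eq_sum (fun i hi => hα0 i (by omega) : ∀ i, N + 1 ≤ i → α i = 0),
    psum_eq_sum (fun i hi => hβ0 i (by omega) : ∀ i, N + 1 ≤ i → β i = 0)]
  omega

end ColRule

/-! ### Abstract grid lemmas -/

structure RuleOK (R : (ℕ → ℕ) → (ℕ → ℕ) → (ℕ → ℕ) → ℕ → (ℕ → ℕ)) : Prop where
  fs : ∀ α β κ G, fsupp α → fsupp β → fsupp κ → fsupp (R α β κ G)
  inter : ∀ α β κ G, fsupp α → fsupp β → Interlaces κ α → Interlaces κ β →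
      Interlaces α (R α β κ G) ∧ Interlaces β (R α β κ G)
  sz : ∀ α β κ G, fsupp α → fsupp β → Interlaces κ α → Interlaces κ β →
      psum (R α β κ G) + psum κ = G + psum α + psum β

lemma rowRuleOK : RuleOK rowRSK :=
  ⟨fun _ _ _ _ => row_fsupp, fun _ _ _ _ _ _ => row_inter,
   fun _ _ _ _ hα hβ => row_psum hα hβ⟩

lemma colRuleOK : RuleOK colRSK :=
  ⟨fun _ _ _ _ => col_fsupp, fun _ _ _ _ _ _ => col_inter,
   fun _ _ _ _ hα hβ => col_psum hα hβ⟩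

structure GrowOK (R : (ℕ → ℕ) → (ℕ → ℕ) → (ℕ → ℕ) → ℕ → (ℕ → ℕ))
    (w : ℕ → ℕ → ℕ) (g : ℕ → ℕ → ℕ → ℕ) : Prop where
  z1 : ∀ j, g 0 j = fun _ => 0
  z2 : ∀ i, g (i+1) 0 = fun _ => 0
  grec : ∀ i j, g (i+1) (j+1) = R (g i (j+1)) (g (i+1) j) (g i j) (w (i+1) (j+1))

variable {R : (ℕ → ℕ) → (ℕ → ℕ) → (ℕ → ℕ) → ℕ → (ℕ → ℕ)}
  {w : ℕ → ℕ → ℕ} {g : ℕ → ℕ → ℕ → ℕ}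

lemma grid_fsupp (hR : RuleOK R) (hg : GrowOK R w g) : ∀ i j, fsupp (g i j) := by
  intro i
  induction i with
  | zero => intro j; rw [hg.z1]; exact fsupp_zero
  | succ i ihi =>
    intro j
    induction j with
    | zero => rw [hg.z2]; exact fsupp_zero
    | succ j ihj =>
      rw [hg.grec]
      exact hR.fs _ _ _ _ (ihi (j+1)) ihj (ihi j)

lemma grid_inter (hR : RuleOK R) (hg : GrowOK R w g) :
    ∀ n i j, i + j ≤ n →
      Interlaces (g i j) (g (i+1) j) ∧ Interlaces (g i j) (g i (j+1)) := by
  intro n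
  induction n with
  | zero =>
    intro i j h
    obtain ⟨rfl, rfl⟩ : i = 0 ∧ j = 0 := by omega
    rw [hg.z1 0, hg.z2 0, hg.z1 1]
    exact ⟨inter_zero, inter_zero⟩
  | succ n ih =>
    intro i j h
    match i, j with
    | 0, 0 =>
      rw [hg.z1 0, hg.z2 0, hg.z1 1]
      exact ⟨inter_zero, inter_zero⟩
    | 0, j+1 =>
      constructor
      · rw [hg.grec 0 j]
        exact (hR.inter _ _ _ _ (grid_fsupp hR hg 0 (j+1)) (grid_fsupp hR hg 1 j)
          (ih 0 j (by omega)).2 (ih 0 j (by omega)).1).1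
      · rw [hg.z1 (j+1), hg.z1 (j+2)]
        exact inter_zero
    | i+1, 0 =>
      constructor
      · rw [hg.z2 i, hg.z2 (i+1)]
        exact inter_zero
      · rw [hg.grec i 0]
        exact (hR.inter _ _ _ _ (grid_fsupp hR hg i 1) (grid_fsupp hR hg (i+1) 0)
          (ih i 0 (by omega)).2 (ih i 0 (by omega)).1).2
    | i+1, j+1 =>
      constructor
      · rw [hg.grec (i+1) j]
        exact (hR.inter _ _ _ _ (grid_fsupp hR hg (i+1) (j+1)) (grid_fsupp hR hg (i+2) j)
          (ih (i+1) j (by omega)).2 (ih (i+1) j (by omega)).1).1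
      · rw [hg.grec i (j+1)]
        exact (hR.inter _ _ _ _ (grid_fsupp hR hg i (j+2)) (grid_fsupp hR hg (i+1) (j+1))
          (ih i (j+1) (by omega)).2 (ih i (j+1) (by omega)).1).2

def S (w : ℕ → ℕ → ℕ) (i j : ℕ) : ℕ :=
  ∑ a ∈ Finset.Icc 1 i, ∑ b ∈ Finset.Icc 1 j, w a b

lemma S_succ_right (w : ℕ → ℕ → ℕ) (i j : ℕ) :
    S w i (j+1) = S w i j + ∑ a ∈ Finset.Icc 1 i, w a (j+1) := by
  unfold S
  rw [← Finset.sum_add_distrib]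
  refine Finset.sum_congr rfl ?_
  intro a _
  rw [Finset.sum_Icc_succ_top (by omega : 1 ≤ j + 1)]

lemma S_succ_left (w : ℕ → ℕ → ℕ) (i j : ℕ) :
    S w (i+1) j = S w i j + ∑ b ∈ Finset.Icc 1 j, w (i+1) b := by
  unfold S
  rw [Finset.sum_Icc_succ_top (by omega : 1 ≤ i + 1)]

lemma grid_psum (hR : RuleOK R) (hg : GrowOK R w g) :
    ∀ i j, psum (g i j) = S w i j := by
  intro i
  induction i with
  | zero =>
    intro j
    rw [hg.z1, psum_zero]
    unfold S
    simp
  | succ i ihi =>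
    intro j
    induction j with
    | zero =>
      rw [hg.z2, psum_zero]
      unfold S
      simp
    | succ j ihj =>
      rw [hg.grec]
      have hsz := hR.sz (g i (j+1)) (g (i+1) j) (g i j) (w (i+1) (j+1))
        (grid_fsupp hR hg i (j+1)) (grid_fsupp hR hg (i+1) j)
        (grid_inter hR hg (i+j) i j le_rfl).2 (grid_inter hR hg (i+j) i j le_rfl).1
      have e1 := ihi (j+1)
      have e2 := ihj
      have e3 := ihi j
      have s1 := S_succ_left w i (j+1)
      have s2 := S_succ_left w i j
      have s3 := S_succ_right w i j
      have s4 : ∑ b ∈ Finset.Icc 1 (j+1), w (i+1) b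
          = ∑ b ∈ Finset.Icc 1 j, w (i+1) b + w (i+1) (j+1) :=
        Finset.sum_Icc_succ_top (by omega) _
      omega

lemma grow_row_ok (w : ℕ → ℕ → ℕ) : GrowOK rowRSK w (growRow w) := by
  refine ⟨?_, ?_, ?_⟩
  · intro j; rw [growRow]
  · intro i; rw [growRow]
  · intro i j; rw [growRow]

lemma grow_col_ok (w : ℕ → ℕ → ℕ) : GrowOK colRSK w (growCol w) := by
  refine ⟨?_, ?_, ?_⟩
  · intro j; rw [growCol]
  · intro i; rw [growCol]
  · intro i j; rw [growCol]

end Stmt17Aux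

open Filter MeasureTheory in

theorem stmt17 (m n : ℕ) (hm : 0 < m) (hn : 0 < n) (w : ℕ → ℕ → ℕ) :
    (∀ k, 1 ≤ k → k ≤ n →
      psum (growRow w m (k - 1)) + (∑ i ∈ Finset.Icc 1 m, w i k) = psum (growRow w m k) ∧
      psum (growCol w m (k - 1)) + (∑ i ∈ Finset.Icc 1 m, w i k) = psum (growCol w m k)) ∧
    (∀ k, 1 ≤ k → k ≤ m →
      psum (growRow w (k - 1) n) + (∑ j ∈ Finset.Icc 1 n, w k j) = psum (growRow w k n) ∧
      psum (growCol w (k - 1) n) + (∑ j ∈ Finset.Icc 1 n, w k j) = psum (growCol w k n)) := by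
  have hrow := Stmt17Aux.grid_psum Stmt17Aux.rowRuleOK (Stmt17Aux.grow_row_ok w)
  have hcol := Stmt17Aux.grid_psum Stmt17Aux.colRuleOK (Stmt17Aux.grow_col_ok w)
  constructor
  · intro k hk1 hk2
    obtain ⟨k', rfl⟩ : ∃ k', k = k' + 1 := ⟨k - 1, by omega⟩
    have hS := Stmt17Aux.S_succ_right w m k'
    have e : ∑ a ∈ Finset.Icc 1 m, w a (k' + 1) = ∑ i ∈ Finset.Icc 1 m, w i (k' + 1) := rfl
    constructor
    · rw [hrow m (k' + 1), hrow m (k' + 1 - 1)]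
      simpa using hS.symm
    · rw [hcol m (k' + 1), hcol m (k' + 1 - 1)]
      simpa using hS.symm
  · intro k hk1 hk2
    obtain ⟨k', rfl⟩ : ∃ k', k = k' + 1 := ⟨k - 1, by omega⟩
    have hS := Stmt17Aux.S_succ_left w k' n
    constructor
    · rw [hrow (k' + 1) n, hrow (k' + 1 - 1) n]
      simpa using hS.symm
    · rw [hcol (k' + 1) n, hcol (k' + 1 - 1) n]
      simpa using hS.symm


end
end

section
/- Let M = (M_{i,j})_{1≤i,j≤n} be a symmetric matrix of non-negative integers, and apply the colRSK local growth rule inductively on the n × n grid with empty partitions on the axes, producing partitions μ^{(i,j)}. Then the output sequence along the north and east boundaries is symmetric: μ^{(i,n)} = μ^{(n,i)} for all 0 ≤ i ≤ n. -/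
open scoped Classical

noncomputable section

lemma Gdesc_comm (α β κ : ℕ → ℕ) (G L : ℕ) : ∀ k, Gdesc α β κ G L k = Gdesc β α κ G L k := by
  intro k
  induction k with
  | zero => rfl
  | succ k ih =>
      show _ = _
      rw [Gdesc, Gdesc, ih, max_comm (α (L - (k + 1) + 1)) (β (L - (k + 1) + 1)),
        min_comm (α (L - (k + 1))) (β (L - (k + 1)))]

lemma colG_comm (α β κ : ℕ → ℕ) (G s : ℕ) : colG α β κ G s = colG β α κ G s := by
  unfold colG
  rw [min_comm (plen α) (plen β), Gdesc_comm]

lemma colRSK_comm (α β κ : ℕ → ℕ) (G : ℕ) : colRSK α β κ G = colRSK β α κ G := by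
  funext s
  cases s with
  | zero => rw [colRSK, colRSK, colG_comm, max_comm (α 0) (β 0)]
  | succ s => rw [colRSK, colRSK, colG_comm, max_comm (α (s + 1)) (β (s + 1))]

open Filter MeasureTheory in

theorem stmt18 (n : ℕ) (hn : 0 < n) (M : ℕ → ℕ → ℕ)
    (hsym : ∀ i j, 1 ≤ i → i ≤ n → 1 ≤ j → j ≤ n → M i j = M j i) :
    ∀ i ≤ n, growCol M i n = growCol M n i := by
  suffices h : ∀ i j, i ≤ n → j ≤ n → growCol M i j = growCol M j i by
    intro i hi; exact h i n hi le_rfl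
  intro i
  induction i with
  | zero =>
      intro j _ _
      cases j with
      | zero => rfl
      | succ j => show growCol M 0 (j + 1) = growCol M (j + 1) 0; rw [growCol, growCol]
  | succ i ihi =>
      intro j hi hj
      induction j with
      | zero => show growCol M (i + 1) 0 = growCol M 0 (i + 1); rw [growCol, growCol]
      | succ j ihj =>
          have hij : i ≤ n := Nat.le_of_succ_le hi
          have hjn : j ≤ n := Nat.le_of_succ_le hj
          rw [growCol, growCol, ihi (j + 1) hij hj, ihi j hij hjn, ihj hjn,
            hsym (i + 1) (j + 1) (Nat.succ_le_succ (Nat.zero_le _)) hi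
              (Nat.succ_le_succ (Nat.zero_le _)) hj,
            colRSK_comm]

/-! ## Statement 19 -/


end
end
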